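/- Let H be a recursively presented group and w a non-trivial central element of H. If the quotient group L = H/⟨w⟩ has solvable word problem, then H has solvable word problem. -/

import Mathlib

/-- Evaluation of a word (a list of generators with signs) in a group. -/
def wordProd {κ : Type*} {G : Type*} [Group G] (x : κ → G) (l : List (κ × Bool)) : G :=
  (l.map fun p => if p.2 then x p.1 else (x p.1)⁻¹).prod

section Helpers

lemma rePred_comp {α β} [Primcodable α] [Primcodable β] {p : β → Prop} {f : α → β}
    (hp : REPred p) (hf : Computable f) : REPred fun a => p (f a) :=
  hp.comp hf

lemma assert_dom {r : Prop} : (Part.assert r fun _ => Part.some ()).Dom ↔ r :=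
  ⟨fun h => h.1, fun h => ⟨h, trivial⟩⟩

lemma rePred_or {α} [Primcodable α] {p q : α → Prop} (hp : REPred p) (hq : REPred q) :
    REPred fun a => p a ∨ q a := by
  obtain ⟨k, hk, H⟩ := Partrec.merge' (f := fun a => Part.assert (p a) fun _ => Part.some ())
    (g := fun a => Part.assert (q a) fun _ => Part.some ()) hp hq
  exact hk.dom_re.of_eq fun a => by rw [(H a).2, assert_dom, assert_dom]

open Nat.Partrec.Code in
lemma rePred_exists {α} [Primcodable α] {p : α × ℕ → Prop} (hp : REPred p) :
    REPred fun a => ∃ n, p (a, n) := by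
  obtain ⟨c, hc⟩ := Nat.Partrec.Code.exists_code.1 hp
  have key : ∀ x : α × ℕ, p x ↔ (eval c (Encodable.encode x)).Dom := by
    intro x
    rw [hc]
    simp [Encodable.encodek, assert_dom]
  set f : α → ℕ → Option ℕ := fun a m =>
    evaln m.unpair.2 c (Encodable.encode (a, m.unpair.1)) with hfdef
  have hf : Computable₂ f := by
    apply Primrec.to_comp
    exact primrec_evaln.comp
      (((Primrec.snd.comp (Primrec.unpair.comp Primrec.snd)).pair (Primrec.const c)).pair
        (Primrec.encode.comp (Primrec.fst.pair
          (Primrec.fst.comp (Primrec.unpair.comp Primrec.snd)))))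
  have hpart := Partrec.rfindOpt hf
  exact hpart.dom_re.of_eq fun a => by
    rw [Nat.rfindOpt_dom]
    constructor
    · rintro ⟨m, x, hx⟩
      refine ⟨m.unpair.1, (key _).2 ?_⟩
      exact Part.dom_iff_mem.2 ⟨_, evaln_complete.2 ⟨_, hx⟩⟩
    · rintro ⟨n, hn⟩
      obtain ⟨x, hx⟩ := Part.dom_iff_mem.1 ((key _).1 hn)
      obtain ⟨s, hs⟩ := evaln_complete.1 hx
      exact ⟨Nat.pair n s, x, by simpa [hfdef] using hs⟩

lemma wordProd_append {κ G : Type*} [Group G] (x : κ → G) (l₁ l₂ : List (κ × Bool)) :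
    wordProd x (l₁ ++ l₂) = wordProd x l₁ * wordProd x l₂ := by
  simp [wordProd]

lemma wordProd_eq_lift_mk {κ G : Type*} [Group G] (x : κ → G) (l : List (κ × Bool)) :
    wordProd x l = FreeGroup.lift x (FreeGroup.mk l) := by
  rw [FreeGroup.lift_mk, wordProd]
  congr 1
  apply List.map_congr_left
  intro p _
  cases p.2 <;> simp

lemma wordProd_surjective {k : ℕ} (rels : Set (FreeGroup (Fin k)))
    (g : PresentedGroup rels) :
    ∃ l, wordProd (fun i => (PresentedGroup.of i : PresentedGroup rels)) l = g := by
  obtain ⟨z, rfl⟩ := PresentedGroup.mk_surjective rels g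
  have hhom : (FreeGroup.lift fun i => (PresentedGroup.of i : PresentedGroup rels)) =
      PresentedGroup.mk rels := by
    apply FreeGroup.ext_hom
    intro a
    simp [PresentedGroup.of]
  exact ⟨z.toWord, by rw [wordProd_eq_lift_mk, FreeGroup.mk_toWord, hhom]⟩

lemma wordProd_rec_pow {κ G : Type*} [Group G] (x : κ → G) (u : List (κ × Bool)) (a : ℕ) :
    wordProd x (Nat.rec [] (fun _ ih => u ++ ih) a) = (wordProd x u) ^ a := by
  induction a with
  | zero => simp [wordProd]
  | succ n ih => rw [pow_succ']; simpa [wordProd_append] using congrArg (wordProd x u * ·) ih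

end Helpers

/-- If `H` is a recursively presented group (on finitely many generators), `w` is a
non-trivial central element of `H`, and the quotient `L = H/⟨w⟩` has solvable word
problem, then `H` has solvable word problem. -/
theorem solvable_wp_of_central_quotient {k : ℕ} (rels : Set (FreeGroup (Fin k)))
    (w : PresentedGroup rels) (hw1 : w ≠ 1) (hwc : w ∈ Subgroup.center (PresentedGroup rels))
    [(Subgroup.zpowers w).Normal]
    (hre : REPred (fun l : List (Fin k × Bool) =>
      wordProd (fun i => (PresentedGroup.of i : PresentedGroup rels)) l = 1))
    (hquot : ComputablePred (fun l : List (Fin k × Bool) =>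
      (QuotientGroup.mk (wordProd (fun i => (PresentedGroup.of i : PresentedGroup rels)) l) :
        PresentedGroup rels ⧸ Subgroup.zpowers w) = 1)) :
    ComputablePred (fun l : List (Fin k × Bool) =>
      wordProd (fun i => (PresentedGroup.of i : PresentedGroup rels)) l = 1) := by
  classical
  set x : Fin k → PresentedGroup rels := fun i => PresentedGroup.of i with hxdef
  obtain ⟨lw, hlw⟩ := wordProd_surjective rels w
  obtain ⟨lw', hlw'⟩ := wordProd_surjective rels w⁻¹
  set d := orderOf w with hd
  have hd1 : d ≠ 1 := fun h => hw1 (orderOf_eq_one_iff.1 h)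
  -- a computable enumeration of the naturals not divisible by d
  obtain ⟨g, hgP, hgnd, hgsurj⟩ :
      ∃ g : ℕ → ℕ, Primrec g ∧ (∀ a, ¬ d ∣ g a) ∧ (∀ b, ¬ d ∣ b → ∃ a, g a = b) := by
    rcases Nat.eq_zero_or_pos d with hd0 | hdpos
    · refine ⟨fun a => a + 1, Primrec.succ, fun a => by simp [hd0], fun b hb => ⟨b - 1, ?_⟩⟩
      have hb0 : b ≠ 0 := fun h => hb (by simp [h])
      show b - 1 + 1 = b
      omega
    · have hd2 : 2 ≤ d := by omega
      have hcond : PrimrecPred fun a : ℕ => a % d = 0 :=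
        Primrec.eq.comp (Primrec.nat_mod.comp Primrec.id (Primrec.const d)) (Primrec.const 0)
      refine ⟨fun a => if a % d = 0 then 1 else a,
        Primrec.ite hcond (Primrec.const 1) Primrec.id, fun a => ?_, fun b hb => ⟨b, ?_⟩⟩
      · dsimp only
        split_ifs with h
        · intro hdd
          have := Nat.le_of_dvd one_pos hdd
          omega
        · exact fun hdd => h ((Nat.dvd_iff_mod_eq_zero ..).1 hdd)
      · dsimp only
        rw [if_neg fun h => hb ((Nat.dvd_iff_mod_eq_zero ..).2 h)]
  have hpow1 : ∀ a : ℕ, ¬ d ∣ a → w ^ a ≠ 1 := fun a h h1 =>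
    h (orderOf_dvd_of_pow_eq_one h1)
  -- words representing powers of w and of w⁻¹
  set rep : ℕ → List (Fin k × Bool) := fun a => Nat.rec [] (fun _ ih => lw ++ ih) a with hrepdef
  set repI : ℕ → List (Fin k × Bool) := fun a => Nat.rec [] (fun _ ih => lw' ++ ih) a with hrepIdef
  have hrep : Primrec rep :=
    Primrec.nat_rec₁ [] ((Primrec.list_append.comp (Primrec.const lw) Primrec.snd).to₂)
  have hrepI : Primrec repI :=
    Primrec.nat_rec₁ [] ((Primrec.list_append.comp (Primrec.const lw') Primrec.snd).to₂)
  have hrepP : ∀ a, wordProd x (rep a) = w ^ a := fun a => by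
    rw [hrepdef]; rw [wordProd_rec_pow, hlw]
  have hrepIP : ∀ a, wordProd x (repI a) = w⁻¹ ^ a := fun a => by
    rw [hrepIdef]; rw [wordProd_rec_pow, hlw']
  -- the search function
  set G : List (Fin k × Bool) × ℕ → List (Fin k × Bool) := fun p =>
    p.1 ++ (if p.2 % 2 = 0 then rep (g (p.2 / 2)) else repI (g (p.2 / 2))) with hGdef
  have hdiv2 : Primrec fun p : List (Fin k × Bool) × ℕ => g (p.2 / 2) :=
    hgP.comp (Primrec.nat_div.comp Primrec.snd (Primrec.const 2))
  have hcond2 : PrimrecPred fun p : List (Fin k × Bool) × ℕ => p.2 % 2 = 0 :=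
    Primrec.eq.comp (Primrec.nat_mod.comp Primrec.snd (Primrec.const 2)) (Primrec.const 0)
  have hG : Computable G :=
    (Primrec.list_append.comp Primrec.fst
      (Primrec.ite hcond2 (hrep.comp hdiv2) (hrepI.comp hdiv2))).to_comp
  have hGP : ∀ l m, wordProd x (G (l, m)) =
      wordProd x l * (if m % 2 = 0 then w ^ g (m / 2) else w⁻¹ ^ g (m / 2)) := by
    intro l m
    rw [hGdef]
    dsimp only
    rw [wordProd_append]
    split_ifs with h
    · rw [hrepP]
    · rw [hrepIP]
  -- the complement is r.e.
  have hCre : REPred fun l : List (Fin k × Bool) => ∃ m, wordProd x (G (l, m)) = 1 :=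
    rePred_exists (rePred_comp hre hG)
  have hNB : REPred fun l : List (Fin k × Bool) =>
      ¬ ((QuotientGroup.mk (wordProd x l) : PresentedGroup rels ⧸ Subgroup.zpowers w) = 1) :=
    hquot.not.to_re
  have hcompl : REPred fun l : List (Fin k × Bool) => ¬ (wordProd x l = 1) := by
    refine (rePred_or hNB hCre).of_eq fun l => ⟨?_, ?_⟩
    · rintro (h | ⟨m, hm⟩) h1
      · exact h (by rw [h1]; simp)
      · rw [hGP, h1, one_mul] at hm
        split_ifs at hm with h2
        · exact hpow1 _ (hgnd _) hm
        · exact hpow1 _ (hgnd _) (by rwa [inv_pow, inv_eq_one] at hm)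
    · intro hne
      by_cases hmem : wordProd x l ∈ Subgroup.zpowers w
      · right
        obtain ⟨n, hn⟩ := Subgroup.mem_zpowers_iff.1 hmem
        have hdvd1 : ∀ nn : ℤ, (d : ℤ) ∣ nn → w ^ nn = 1 := by
          rintro nn ⟨t, rfl⟩
          rw [zpow_mul, zpow_natCast, hd, pow_orderOf_eq_one, one_zpow]
        have hnabs : ¬ d ∣ n.natAbs := by
          intro h
          exact hne (hn ▸ hdvd1 n (Int.dvd_natAbs.1 (Int.natCast_dvd_natCast.2 h)))
        obtain ⟨a', ha'⟩ := hgsurj n.natAbs hnabs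
        rcases Int.natAbs_eq n with he | he
        · refine ⟨2 * a' + 1, ?_⟩
          rw [hGP]
          rw [he, zpow_natCast] at hn
          rw [if_neg (by omega), (by omega : (2 * a' + 1) / 2 = a'), ha', ← hn,
            inv_pow, mul_inv_cancel]
        · refine ⟨2 * a', ?_⟩
          rw [hGP]
          rw [he, zpow_neg, zpow_natCast] at hn
          rw [if_pos (by omega), (by omega : 2 * a' / 2 = a'), ha', ← hn, inv_mul_cancel]
      · exact Or.inl fun h => hmem ((QuotientGroup.eq_one_iff _).1 h)
  exact ComputablePred.computable_iff_re_compl_re.2 ⟨hre, hcompl⟩
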